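/- For the cooperative Parrondo Markov chain on {0,1}^N with p_0 = 1, p_3 = 0, 0 < p_1 + p_2 < 2, and N odd, the set of 2N states in which 0s and 1s alternate except for exactly one pair of adjacent equal symbols (a pair of adjacent 0s or a pair of adjacent 1s) is closed, irreducible, and aperiodic, and all states outside this set are transient. -/

import Mathlib

namespace Stmt3

variable {N : ℕ}

def flip (x : Fin N → Bool) (i : Fin N) : Fin N → Bool := Function.update x i (!x i)

def mIdx [NeZero N] (x : Fin N → Bool) (i : Fin N) : Fin 4 :=
  (if x (i - 1) then 2 else 0) + (if x (i + 1) then 1 else 0)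

noncomputable def rate [NeZero N] (p : Fin 4 → ℝ) (x : Fin N → Bool) (i : Fin N) : ℝ :=
  if x i then 1 - p (mIdx x i) else p (mIdx x i)

noncomputable def Pmat [NeZero N] (p : Fin 4 → ℝ) : Matrix (Fin N → Bool) (Fin N → Bool) ℝ :=
  fun x y => (∑ i : Fin N, if y = flip x i then rate p x i else 0) / N
    + (if y = x then (∑ i : Fin N, (1 - rate p x i)) / N else 0)

def Accessible [NeZero N] (p : Fin 4 → ℝ) (x y : Fin N → Bool) : Prop :=
  ∃ n : ℕ, 0 < (Pmat p ^ n) x y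

def Transient [NeZero N] (p : Fin 4 → ℝ) (x : Fin N → Bool) : Prop :=
  ∃ y : Fin N → Bool, Accessible p x y ∧ ¬ Accessible p y x

/-- The set of `2N` "defect" states: `0`s and `1`s alternate around the circle except
for exactly one pair of adjacent equal symbols. -/
def DefectSet (N : ℕ) [NeZero N] : Set (Fin N → Bool) :=
  {x | (Finset.univ.filter fun i : Fin N => x i = x (i + 1)).card = 1}

/-! ### auxiliary development -/

section Aux
variable [NeZero N]
open Fin.NatCast Fin.CommRing
set_option linter.unusedSectionVars false

/-- The set of "defect edges". -/
def E (x : Fin N → Bool) : Finset (Fin N) :=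
  Finset.univ.filter fun i : Fin N => x i = x (i + 1)

lemma mem_E {x : Fin N → Bool} {j : Fin N} : j ∈ E x ↔ x j = x (j + 1) := by
  simp [E]

lemma mem_DefectSet {x : Fin N → Bool} : x ∈ DefectSet N ↔ (E x).card = 1 := Iff.rfl

lemma flip_apply_self (x : Fin N → Bool) (i : Fin N) : flip x i i = !x i := by
  simp [flip]

lemma flip_apply_ne (x : Fin N → Bool) {i k : Fin N} (h : k ≠ i) : flip x i k = x k := by
  simp [flip, Function.update_apply, h]

lemma flip_ne (x : Fin N → Bool) (i : Fin N) : flip x i ≠ x := by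
  intro h
  have := congrFun h i
  rw [flip_apply_self] at this
  cases hx : x i <;> rw [hx] at this <;> simp at this

lemma flip_inj {x : Fin N → Bool} {i i' : Fin N} (h : flip x i = flip x i') : i = i' := by
  by_contra hne
  have := congrFun h i
  rw [flip_apply_self, flip_apply_ne x hne] at this
  cases hx : x i <;> rw [hx] at this <;> simp at this

/-! ### Fin arithmetic helpers -/

lemma val_cast_of_lt {m : ℕ} (h : m < N) : ((m : Fin N)).val = m := by
  rw [Fin.val_natCast, Nat.mod_eq_of_lt h]

lemma one_ne_zero' (hN : 3 ≤ N) : (1 : Fin N) ≠ 0 := by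
  intro h
  have h1 : (1 : Fin N).val = (0 : Fin N).val := congrArg Fin.val h
  rw [Fin.val_one'] at h1
  simp at h1
  omega

lemma sub_one_ne (hN : 3 ≤ N) (i : Fin N) : i - 1 ≠ i := by
  intro h
  have : (1 : Fin N) = 0 := by
    have := sub_eq_self.mp h
    exact this
  exact one_ne_zero' hN this

lemma add_one_ne (hN : 3 ≤ N) (i : Fin N) : i + 1 ≠ i := by
  intro h
  exact one_ne_zero' hN (by linear_combination h)

lemma val_neg_one (hN : 3 ≤ N) : ((-1 : Fin N)).val = N - 1 := by
  have h1 : ((N - 1 : ℕ) : Fin N) = -1 := by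
    have h2 : ((N - 1 : ℕ) : Fin N) + ((1 : ℕ) : Fin N) = ((N : ℕ) : Fin N) := by
      rw [← Nat.cast_add]
      congr 1
      omega
    rw [Fin.natCast_self, Nat.cast_one] at h2
    linear_combination h2
  rw [← h1, val_cast_of_lt (by omega)]

/-! ### edge toggling -/

lemma mem_E_flip (hN : 3 ≤ N) (x : Fin N → Bool) (i e : Fin N) :
    e ∈ E (flip x i) ↔ (if e = i - 1 ∨ e = i then e ∉ E x else e ∈ E x) := by
  by_cases h1 : e = i - 1
  · subst h1
    rw [if_pos (Or.inl rfl)]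
    have hs : (i - 1) + 1 = i := by ring
    rw [mem_E, mem_E, hs, flip_apply_ne x (sub_one_ne hN i), flip_apply_self]
    cases x (i - 1) <;> cases x i <;> simp
  · by_cases h2 : e = i
    · subst h2
      rw [if_pos (Or.inr rfl)]
      rw [mem_E, mem_E, flip_apply_self, flip_apply_ne x (add_one_ne hN e)]
      cases x e <;> cases x (e + 1) <;> simp
    · rw [if_neg (by tauto)]
      have h3 : e + 1 ≠ i := by
        intro h
        exact h1 (by linear_combination h)
      rw [mem_E, mem_E, flip_apply_ne x h2, flip_apply_ne x h3]

/-! ### rate and Pmat basics -/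

variable {p : Fin 4 → ℝ}

lemma rate_nonneg (hp : ∀ m, p m ∈ Set.Icc (0:ℝ) 1) (x : Fin N → Bool) (i : Fin N) :
    0 ≤ rate p x i := by
  unfold rate
  rcases hp (mIdx x i) with ⟨h0, h1⟩
  split <;> linarith

lemma rate_le_one (hp : ∀ m, p m ∈ Set.Icc (0:ℝ) 1) (x : Fin N → Bool) (i : Fin N) :
    rate p x i ≤ 1 := by
  unfold rate
  rcases hp (mIdx x i) with ⟨h0, h1⟩
  split <;> linarith

lemma Ncast_pos : (0:ℝ) < N := by
  have := Nat.pos_of_ne_zero (NeZero.ne N)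
  exact_mod_cast this

lemma Pmat_nonneg (hp : ∀ m, p m ∈ Set.Icc (0:ℝ) 1) (x y : Fin N → Bool) :
    0 ≤ Pmat p x y := by
  unfold Pmat
  have hN0 : (0:ℝ) ≤ N := le_of_lt Ncast_pos
  apply add_nonneg
  · apply div_nonneg _ hN0
    apply Finset.sum_nonneg
    intro i _
    split
    · exact rate_nonneg hp x i
    · exact le_refl 0
  · split
    · apply div_nonneg _ hN0
      apply Finset.sum_nonneg
      intro i _
      have := rate_le_one hp x i
      linarith
    · exact le_refl 0

lemma Pmat_flip (p : Fin 4 → ℝ) (x : Fin N → Bool) (i : Fin N) :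
    Pmat p x (flip x i) = rate p x i / N := by
  unfold Pmat
  rw [if_neg (flip_ne x i), add_zero]
  congr 1
  rw [Finset.sum_eq_single i]
  · rw [if_pos rfl]
  · intro b _ hb
    rw [if_neg]
    intro h
    exact hb (flip_inj h).symm
  · intro h
    exact absurd (Finset.mem_univ i) h

lemma Pmat_flip_pos (p : Fin 4 → ℝ) {x : Fin N → Bool} {i : Fin N} (h : 0 < rate p x i) :
    0 < Pmat p x (flip x i) := by
  rw [Pmat_flip]
  exact div_pos h Ncast_pos

lemma Pmat_diag (p : Fin 4 → ℝ) (x : Fin N → Bool) :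
    Pmat p x x = (∑ i : Fin N, (1 - rate p x i)) / N := by
  unfold Pmat
  rw [if_pos rfl]
  have : (∑ i : Fin N, if x = flip x i then rate p x i else 0) = 0 := by
    apply Finset.sum_eq_zero
    intro i _
    rw [if_neg (fun h => flip_ne x i h.symm)]
  rw [this, zero_div, zero_add]

/-! ### accessibility -/

lemma pow_entry_nonneg (hp : ∀ m, p m ∈ Set.Icc (0:ℝ) 1) (n : ℕ) (x y : Fin N → Bool) :
    0 ≤ (Pmat p ^ n) x y := by
  induction n generalizing x y with
  | zero =>
    rw [pow_zero, Matrix.one_apply]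
    split <;> norm_num
  | succ n ih =>
    rw [pow_succ, Matrix.mul_apply]
    exact Finset.sum_nonneg fun w _ => mul_nonneg (ih x w) (Pmat_nonneg hp w y)

lemma entry_mul_le (hp : ∀ m, p m ∈ Set.Icc (0:ℝ) 1) (n m : ℕ) (x y z : Fin N → Bool) :
    (Pmat p ^ n) x y * (Pmat p ^ m) y z ≤ (Pmat p ^ (n + m)) x z := by
  rw [pow_add, Matrix.mul_apply]
  exact Finset.single_le_sum
    (f := fun w => (Pmat p ^ n) x w * (Pmat p ^ m) w z)
    (fun w _ => mul_nonneg (pow_entry_nonneg hp n x w) (pow_entry_nonneg hp m w z))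
    (Finset.mem_univ y)

lemma accessible_refl (p : Fin 4 → ℝ) (x : Fin N → Bool) : Accessible p x x :=
  ⟨0, by rw [pow_zero, Matrix.one_apply_eq]; norm_num⟩

lemma accessible_step (p : Fin 4 → ℝ) {x y : Fin N → Bool} (h : 0 < Pmat p x y) :
    Accessible p x y := ⟨1, by rwa [pow_one]⟩

lemma accessible_trans (hp : ∀ m, p m ∈ Set.Icc (0:ℝ) 1) {x y z : Fin N → Bool}
    (hxy : Accessible p x y) (hyz : Accessible p y z) : Accessible p x z := by
  obtain ⟨n, hn⟩ := hxy
  obtain ⟨m, hm⟩ := hyz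
  exact ⟨n + m, lt_of_lt_of_le (mul_pos hn hm) (entry_mul_le hp n m x y z)⟩

/-! ### rate computations -/

lemma rate_zero_of_alt (hp0 : p 0 = 1) (hp3 : p 3 = 0) {x : Fin N → Bool} {i : Fin N}
    (ha : ¬ x (i - 1) = x i) (hc : ¬ x i = x (i + 1)) : rate p x i = 0 := by
  cases hxi : x i
  · have ha' : x (i - 1) = true := by
      cases h : x (i - 1)
      · rw [hxi, h] at ha; simp at ha
      · rfl
    have hc' : x (i + 1) = true := by
      cases h : x (i + 1)
      · rw [hxi, h] at hc; simp at hc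
      · rfl
    rw [rate, mIdx, hxi, ha', hc']
    simp only [if_true, if_false, Bool.false_eq_true]
    rw [show ((2:Fin 4) + 1) = 3 from rfl]
    exact hp3
  · have ha' : x (i - 1) = false := by
      cases h : x (i - 1)
      · rfl
      · rw [hxi, h] at ha; simp at ha
    have hc' : x (i + 1) = false := by
      cases h : x (i + 1)
      · rfl
      · rw [hxi, h] at hc; simp at hc
    rw [rate, mIdx, hxi, ha', hc']
    simp only [Bool.false_eq_true, if_false, if_true]
    rw [show ((0:Fin 4) + 0) = 0 from rfl, hp0]
    ring

/-- Selection of a drift direction `σ = ±1` in which any defect can always be pushed. -/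
lemma mode_exists (hN : 3 ≤ N) (hp : ∀ m, p m ∈ Set.Icc (0:ℝ) 1)
    (hp0 : p 0 = 1) (hp3 : p 3 = 0)
    (hsum_pos : 0 < p 1 + p 2) (hsum_lt : p 1 + p 2 < 2) :
    ∃ σ : Fin N, (σ = 1 ∨ σ = -1) ∧
      ∀ (x : Fin N → Bool) (j : Fin N), x j = x (j + 1) →
        ∃ i : Fin N, 0 < rate p x i ∧ ({i - 1, i} : Finset (Fin N)) = {j, j + σ} := by
  have hmode : (0 < p 1 ∧ p 2 < 1) ∨ (0 < p 2 ∧ p 1 < 1) := by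
    rcases (hp 1).1.lt_or_eq with h1 | h1
    · rcases (hp 2).2.lt_or_eq with h2 | h2
      · exact Or.inl ⟨h1, h2⟩
      · rcases (hp 1).2.lt_or_eq with h3 | h3
        · exact Or.inr ⟨by linarith, h3⟩
        · exfalso; linarith
    · rcases (hp 2).1.lt_or_eq with h2 | h2
      · exact Or.inr ⟨h2, by linarith [(hp 1).2]⟩
      · exfalso; linarith
  rcases hmode with ⟨h1, h2⟩ | ⟨h1, h2⟩
  · -- rightward: flip site j+1
    refine ⟨1, Or.inl rfl, fun x j hj => ⟨j + 1, ?_, by rw [add_sub_cancel_right]⟩⟩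
    have ha : x ((j + 1) - 1) = x (j + 1) := by rw [add_sub_cancel_right]; exact hj
    rw [rate, mIdx, ha]
    cases hv : x (j + 1) <;> cases hc : x (j + 1 + 1) <;>
      simp only [hv, hc, if_true, if_false, Bool.false_eq_true, Bool.true_eq_false]
    · rw [show ((0:Fin 4) + 0) = 0 from rfl, hp0]; norm_num
    · rw [show ((0:Fin 4) + 1) = 1 from rfl]; exact h1
    · rw [show ((2:Fin 4) + 0) = 2 from rfl]; linarith
    · rw [show ((2:Fin 4) + 1) = 3 from rfl, hp3]; norm_num
  · -- leftward: flip site j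
    refine ⟨-1, Or.inr rfl, fun x j hj => ⟨j, ?_, ?_⟩⟩
    · rw [rate, mIdx]
      cases hv : x j <;> cases ha : x (j - 1) <;>
        rw [hj] at hv <;>
        simp only [hv, ha, hj ▸ hv, if_true, if_false, Bool.false_eq_true, Bool.true_eq_false]
      · rw [show ((0:Fin 4) + 0) = 0 from rfl, hp0]; norm_num
      · rw [show ((2:Fin 4) + 0) = 2 from rfl]; exact h1
      · rw [show ((0:Fin 4) + 1) = 1 from rfl]; linarith
      · rw [show ((2:Fin 4) + 1) = 3 from rfl, hp3]; norm_num
    · have hj1 : j + (-1) = j - 1 := by ring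
      rw [Finset.pair_comm, hj1]

/-! ### the defect states -/

/-- The defect state with defect edge `{j, j+1}` and value `b` there. -/
def D (j : Fin N) (b : Bool) : Fin N → Bool :=
  fun i => xor b (decide ((i - (j + 1)).val % 2 = 1))

lemma D_apply (j : Fin N) (b : Bool) (i : Fin N) :
    D j b i = xor b (decide ((i - (j + 1)).val % 2 = 1)) := rfl

lemma D_apply_succ (j : Fin N) (b : Bool) : D j b (j + 1) = b := by
  rw [D_apply, sub_self]
  simp

lemma E_D (hN : 3 ≤ N) (hNodd : Odd N) (j : Fin N) (b : Bool) : E (D j b) = {j} := by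
  have hN2 : N % 2 = 1 := Nat.odd_iff.mp hNodd
  ext e
  rw [mem_E, Finset.mem_singleton]
  have h1 : e + 1 - (j + 1) = (e - (j + 1)) + 1 := by ring
  rw [D_apply, D_apply, h1]
  set a := e - (j + 1) with ha
  have hxor : ∀ s t : Bool, (xor b s = xor b t) ↔ s = t := by
    cases b <;> decide
  rw [hxor, decide_eq_decide]
  have hval : (a + 1).val = (a.val + 1) % N := by
    rw [Fin.val_add, Fin.val_one']
    congr 1
    rw [Nat.mod_eq_of_lt (by omega : 1 < N)]
  have haN : a.val < N := a.isLt
  have hej : e = j ↔ a = -1 := by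
    constructor
    · intro h
      rw [ha, h]
      ring
    · intro h
      have : e = a + (j + 1) := by rw [ha]; ring
      rw [this, h]
      ring
  by_cases hcase : a.val = N - 1
  · have hv1 : a = -1 := Fin.ext (by rw [hcase, val_neg_one hN])
    rw [hval, hcase, Nat.sub_add_cancel (by omega), Nat.mod_self]
    constructor
    · intro _
      exact hej.mpr hv1
    · intro _
      omega
  · have hlt : a.val + 1 < N := by omega
    rw [hval, Nat.mod_eq_of_lt hlt]
    have hne : ¬ e = j := by
      intro h
      have := hej.mp h
      rw [this, val_neg_one hN] at hcase
      exact hcase rfl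
    constructor
    · intro h
      omega
    · intro h
      exact absurd h hne

lemma D_mem_DefectSet (hN : 3 ≤ N) (hNodd : Odd N) (j : Fin N) (b : Bool) :
    D j b ∈ DefectSet N := by
  rw [mem_DefectSet, E_D hN hNodd, Finset.card_singleton]

lemma D_uniq (hN : 3 ≤ N) {x : Fin N → Bool} {j : Fin N} (h : E x = {j}) :
    x = D j (x (j + 1)) := by
  set b := x (j + 1) with hb
  have key : ∀ t : ℕ, t < N → x (j + 1 + (t : Fin N)) = xor b (decide (t % 2 = 1)) := by
    intro t
    induction t with
    | zero =>
      intro _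
      simp [hb]
    | succ t ih =>
      intro hlt
      have hx := ih (by omega)
      have hne : j + 1 + (t : Fin N) ≠ j := by
        intro hcontra
        have h2 : ((1 + t : ℕ) : Fin N) = 0 := by
          push_cast
          linear_combination hcontra
        have h3 := congrArg Fin.val h2
        rw [val_cast_of_lt (by omega : 1 + t < N)] at h3
        simp at h3
      have hnm : ¬ (x (j + 1 + (t:Fin N)) = x (j + 1 + (t:Fin N) + 1)) := by
        intro hmem
        have : j + 1 + (t:Fin N) ∈ E x := mem_E.mpr hmem
        rw [h, Finset.mem_singleton] at this
        exact hne this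
      have hstep : x (j + 1 + ((t + 1 : ℕ) : Fin N)) = ! x (j + 1 + (t:Fin N)) := by
        have hc : ((t + 1 : ℕ) : Fin N) = (t : Fin N) + 1 := by push_cast; ring
        rw [hc, ← add_assoc]
        cases hv : x (j + 1 + (t:Fin N)) <;> cases hw : x (j + 1 + (t:Fin N) + 1) <;>
          rw [hv, hw] at hnm <;> simp_all
      rw [hstep, hx]
      rcases Nat.mod_two_eq_zero_or_one t with hm | hm
      · have hm1 : (t + 1) % 2 = 1 := by omega
        rw [hm, hm1]
        cases b <;> rfl
      · have hm1 : (t + 1) % 2 = 0 := by omega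
        rw [hm, hm1]
        cases b <;> rfl
  funext i
  have hi : j + 1 + (((i - (j + 1)).val : ℕ) : Fin N) = i := by
    rw [Fin.cast_val_eq_self]
    ring
  have hk := key (i - (j + 1)).val (Fin.is_lt _)
  rw [hi] at hk
  rw [hk, D_apply]

lemma D_inj (hN : 3 ≤ N) (hNodd : Odd N) {j j' : Fin N} {b b' : Bool}
    (h : D j b = D j' b') : j = j' ∧ b = b' := by
  have hE : ({j} : Finset (Fin N)) = {j'} := by
    rw [← E_D hN hNodd j b, ← E_D hN hNodd j' b', h]
  have hj : j = j' := by
    rwa [Finset.singleton_inj] at hE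
  subst hj
  refine ⟨rfl, ?_⟩
  have := congrFun h (j + 1)
  rwa [D_apply_succ, D_apply_succ] at this

/-! ### parity: the number of defect edges is odd -/

lemma card_E_odd (hNodd : Odd N) (x : Fin N → Bool) : Odd (E x).card := by
  classical
  set u := (Finset.univ.filter fun j : Fin N => ¬ (x j = x (j + 1))).card with hu
  have hsplit : (E x).card + u = N := by
    rw [hu, E]
    rw [Finset.card_filter_add_card_filter_not]
    simp
  have heven : (u : ZMod 2) = 0 := by
    have h1 : (u : ZMod 2) = ∑ j : Fin N, (if x j = x (j + 1) then 0 else 1) := by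
      rw [hu]
      rw [Finset.card_filter]
      push_cast
      apply Finset.sum_congr rfl
      intro j _
      by_cases h : x j = x (j + 1) <;> simp [h]
    set f : Fin N → ZMod 2 := fun j => if x j then 1 else 0 with hf
    have h2 : ∀ j : Fin N, (if x j = x (j + 1) then (0 : ZMod 2) else 1) = f j + f (j + 1) := by
      intro j
      rw [hf]
      cases hxj : x j <;> cases hxj1 : x (j + 1) <;> simp [hxj, hxj1] <;> decide
    rw [h1, Finset.sum_congr rfl (fun j _ => h2 j), Finset.sum_add_distrib]
    have h3 : (∑ j : Fin N, f (j + 1)) = ∑ j : Fin N, f j :=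
      Fintype.sum_equiv (Equiv.addRight (1 : Fin N)) _ _ (fun j => rfl)
    rw [h3]
    exact CharTwo.add_self_eq_zero _
  have hdvd : 2 ∣ u := by
    rwa [ZMod.natCast_eq_zero_iff] at heven
  have hNo : N % 2 = 1 := Nat.odd_iff.mp hNodd
  rw [Nat.odd_iff]
  omega

/-! ### cardinality of the defect set -/

lemma DefectSet_eq_range (hN : 3 ≤ N) (hNodd : Odd N) :
    DefectSet N = Set.range (fun q : Fin N × Bool => D q.1 q.2) := by
  ext x
  constructor
  · intro hx
    obtain ⟨j, hj⟩ := Finset.card_eq_one.mp (mem_DefectSet.mp hx)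
    exact ⟨(j, x (j + 1)), (D_uniq hN hj).symm⟩
  · rintro ⟨⟨j, b⟩, rfl⟩
    exact D_mem_DefectSet hN hNodd j b

lemma card_DefectSet (hN : 3 ≤ N) (hNodd : Odd N) : Nat.card (DefectSet N) = 2 * N := by
  rw [DefectSet_eq_range hN hNodd]
  have hinj : Function.Injective (fun q : Fin N × Bool => D q.1 q.2) := by
    rintro ⟨j, b⟩ ⟨j', b'⟩ h
    obtain ⟨h1, h2⟩ := D_inj hN hNodd h
    exact Prod.ext h1 h2
  rw [Nat.card_range_of_injective hinj, Nat.card_eq_fintype_card, Fintype.card_prod,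
    Fintype.card_fin, Fintype.card_bool]
  ring

/-! ### closedness -/

lemma flip_defect_of_rate (hN : 3 ≤ N) (hp0 : p 0 = 1) (hp3 : p 3 = 0)
    {x : Fin N → Bool} (hx : x ∈ DefectSet N) {i : Fin N} (hr : rate p x i ≠ 0) :
    flip x i ∈ DefectSet N := by
  have hadj : x (i - 1) = x i ∨ x i = x (i + 1) := by
    by_contra hc
    push_neg at hc
    exact hr (rate_zero_of_alt hp0 hp3 hc.1 hc.2)
  obtain ⟨j, hj⟩ := Finset.card_eq_one.mp (mem_DefectSet.mp hx)
  have hji : j = i - 1 ∨ j = i := by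
    rcases hadj with h | h
    · left
      have hm : i - 1 ∈ E x := mem_E.mpr (by rwa [sub_add_cancel])
      rw [hj, Finset.mem_singleton] at hm
      exact hm.symm
    · right
      have hm : i ∈ E x := mem_E.mpr h
      rw [hj, Finset.mem_singleton] at hm
      exact hm.symm
  rw [mem_DefectSet]
  rcases hji with rfl | rfl
  · have hEy : E (flip x i) = {i} := by
      ext e
      rw [mem_E_flip hN, Finset.mem_singleton]
      by_cases h1 : e = i - 1
      · subst h1
        rw [if_pos (Or.inl rfl)]
        have hm : i - 1 ∈ E x := by rw [hj]; exact Finset.mem_singleton_self _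
        simp [hm, sub_one_ne hN i]
      · by_cases h2 : e = i
        · subst h2
          rw [if_pos (Or.inr rfl)]
          have hm : e ∉ E x := by
            rw [hj, Finset.mem_singleton]
            exact fun h => (sub_one_ne hN e) h.symm
          simp [hm]
        · rw [if_neg (by tauto), hj, Finset.mem_singleton]
          constructor
          · intro h
            exact absurd h h1
          · intro h
            exact absurd h h2
    rw [hEy, Finset.card_singleton]
  · have hEy : E (flip x j) = {j - 1} := by
      ext e
      rw [mem_E_flip hN, Finset.mem_singleton]
      by_cases h1 : e = j - 1
      · subst h1
        rw [if_pos (Or.inl rfl)]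
        have hm : j - 1 ∉ E x := by
          rw [hj, Finset.mem_singleton]
          exact sub_one_ne hN j
        simp [hm]
      · by_cases h2 : e = j
        · subst h2
          rw [if_pos (Or.inr rfl)]
          have hm : e ∈ E x := by rw [hj]; exact Finset.mem_singleton_self _
          simp [hm]
          exact fun h => (sub_one_ne hN e) h.symm
        · rw [if_neg (by tauto), hj, Finset.mem_singleton]
          constructor
          · intro h
            exact absurd h h2
          · intro h
            exact absurd h h1
    rw [hEy, Finset.card_singleton]

lemma closed_step (hN : 3 ≤ N) (hp0 : p 0 = 1) (hp3 : p 3 = 0) :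
    ∀ x ∈ DefectSet N, ∀ y ∉ DefectSet N, Pmat p x y = 0 := by
  intro x hx y hy
  have hxy : ¬ y = x := fun h => hy (h ▸ hx)
  show (∑ i : Fin N, if y = flip x i then rate p x i else 0) / N
    + (if y = x then (∑ i : Fin N, (1 - rate p x i)) / N else 0) = 0
  rw [if_neg hxy, add_zero, div_eq_zero_iff]
  left
  apply Finset.sum_eq_zero
  intro i _
  split_ifs with hflip
  · by_contra hr
    exact hy (hflip ▸ flip_defect_of_rate hN hp0 hp3 hx hr)
  · rfl

lemma closed_pow (hN : 3 ≤ N) (hp : ∀ m, p m ∈ Set.Icc (0:ℝ) 1)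
    (hp0 : p 0 = 1) (hp3 : p 3 = 0) (n : ℕ) :
    ∀ y ∈ DefectSet N, ∀ z ∉ DefectSet N, (Pmat p ^ n) y z = 0 := by
  induction n with
  | zero =>
    intro y hy z hz
    rw [pow_zero, Matrix.one_apply, if_neg]
    intro h
    exact hz (h ▸ hy)
  | succ n ih =>
    intro y hy z hz
    rw [pow_succ, Matrix.mul_apply]
    apply Finset.sum_eq_zero
    intro w _
    by_cases hw : w ∈ DefectSet N
    · rw [closed_step hN hp0 hp3 w hw z hz, mul_zero]
    · rw [ih y hy w hw, zero_mul]

/-! ### self-loops at defect states -/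

lemma two_ne_zero' (hN : 3 ≤ N) : (2 : Fin N) ≠ 0 := by
  intro h
  have h1 : ((2 : ℕ) : Fin N) = 0 := by push_cast; exact h
  have h2 := congrArg Fin.val h1
  rw [val_cast_of_lt (by omega : 2 < N)] at h2
  simp at h2

lemma loop_pos (hN : 3 ≤ N) (hp : ∀ m, p m ∈ Set.Icc (0:ℝ) 1)
    (hp0 : p 0 = 1) (hp3 : p 3 = 0)
    {x : Fin N → Bool} (hx : x ∈ DefectSet N) : 0 < Pmat p x x := by
  obtain ⟨j, hj⟩ := Finset.card_eq_one.mp (mem_DefectSet.mp hx)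
  set i0 : Fin N := j + 2 with hi0
  have he1 : i0 - 1 ∉ E x := by
    rw [hj, Finset.mem_singleton, hi0]
    intro h
    have : (1 : Fin N) = 0 := by linear_combination h
    exact one_ne_zero' hN this
  have he2 : i0 ∉ E x := by
    rw [hj, Finset.mem_singleton, hi0]
    intro h
    have : (2 : Fin N) = 0 := by linear_combination h
    exact two_ne_zero' hN this
  have hrate : rate p x i0 = 0 := by
    apply rate_zero_of_alt hp0 hp3
    · intro h
      apply he1
      rw [mem_E]
      rwa [sub_add_cancel]
    · intro h
      exact he2 (mem_E.mpr h)
  rw [Pmat_diag]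
  apply div_pos _ Ncast_pos
  have hterm : (1 : ℝ) - rate p x i0 = 1 := by rw [hrate]; ring
  calc (0:ℝ) < 1 := one_pos
    _ = 1 - rate p x i0 := hterm.symm
    _ ≤ ∑ i : Fin N, (1 - rate p x i) := by
        apply Finset.single_le_sum (f := fun i => 1 - rate p x i)
        · intro i _
          have := rate_le_one hp x i
          linarith
        · exact Finset.mem_univ i0

lemma pow_diag_pos (hp : ∀ m, p m ∈ Set.Icc (0:ℝ) 1) {x : Fin N → Bool}
    (h : 0 < Pmat p x x) (k : ℕ) : 0 < (Pmat p ^ k) x x := by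
  induction k with
  | zero =>
    rw [pow_zero, Matrix.one_apply_eq]
    norm_num
  | succ k ih =>
    have := entry_mul_le hp k 1 x x x
    rw [pow_one] at this
    exact lt_of_lt_of_le (mul_pos ih h) this

/-! ### one-step move of a defect state -/

lemma pair_cases {i j σ : Fin N} (h : ({i - 1, i} : Finset (Fin N)) = {j, j + σ})
    (hσ : σ ≠ 0) : (i - 1 = j ∧ i = j + σ) ∨ (i - 1 = j + σ ∧ i = j) := by
  have hji : j = i - 1 ∨ j = i := by
    have : j ∈ ({i - 1, i} : Finset (Fin N)) := by
      rw [h]; exact Finset.mem_insert_self _ _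
    rwa [Finset.mem_insert, Finset.mem_singleton] at this
  have hji' : j + σ = i - 1 ∨ j + σ = i := by
    have : j + σ ∈ ({i - 1, i} : Finset (Fin N)) := by
      rw [h]; exact Finset.mem_insert_of_mem (Finset.mem_singleton_self _)
    rwa [Finset.mem_insert, Finset.mem_singleton] at this
  have hne : j ≠ j + σ := fun hc => hσ (by linear_combination -hc)
  rcases hji with h1 | h1 <;> rcases hji' with h2 | h2
  · exact absurd (h1.trans h2.symm) hne
  · exact Or.inl ⟨h1.symm, h2.symm⟩
  · exact Or.inr ⟨h2.symm, h1.symm⟩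
  · exact absurd (h1.trans h2.symm) hne

lemma sigma_ne_zero (hN : 3 ≤ N) {σ : Fin N} (hσ : σ = 1 ∨ σ = -1) : σ ≠ 0 := by
  rcases hσ with rfl | rfl
  · exact one_ne_zero' hN
  · intro h
    apply one_ne_zero' hN
    linear_combination -h

lemma D_flip_eq (hN : 3 ≤ N) (hNodd : Odd N) {σ : Fin N} (hσ : σ = 1 ∨ σ = -1)
    {j : Fin N} {b : Bool} {i : Fin N}
    (hpair : ({i - 1, i} : Finset (Fin N)) = {j, j + σ}) :
    flip (D j b) i = D (j + σ) (!b) := by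
  have hσ0 : σ ≠ 0 := sigma_ne_zero hN hσ
  have hjσ : j ≠ j + σ := fun hc => hσ0 (by linear_combination -hc)
  -- the edge set of the flipped state is {j + σ}
  have hEy : E (flip (D j b) i) = {j + σ} := by
    ext e
    rw [mem_E_flip hN, Finset.mem_singleton]
    have hmem : (e = i - 1 ∨ e = i) ↔ (e = j ∨ e = j + σ) := by
      have h1 := Finset.ext_iff.mp hpair e
      simpa using h1
    by_cases hc : e = i - 1 ∨ e = i
    · rw [if_pos hc]
      rcases hmem.mp hc with rfl | rfl
      · have hmm : e ∈ E (D e b) := by rw [E_D hN hNodd]; exact Finset.mem_singleton_self _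
        simp only [hmm, not_true, false_iff]
        intro hc2
        exact hσ0 (by linear_combination -hc2)
      · have hmm : j + σ ∉ E (D j b) := by
          rw [E_D hN hNodd, Finset.mem_singleton]
          exact fun h => hjσ h.symm
        simp [hmm]
    · rw [if_neg hc]
      have he1 : ¬ (e = j ∨ e = j + σ) := fun h => hc (hmem.mpr h)
      push_neg at he1
      rw [E_D hN hNodd, Finset.mem_singleton]
      constructor
      · intro h
        exact absurd h he1.1
      · intro h
        exact absurd h he1.2
  have huniq := D_uniq hN hEy
  rw [huniq]
  congr 1
  -- compute the value of the flipped state at (j + σ) + 1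
  rcases pair_cases hpair hσ0 with ⟨hA, hB⟩ | ⟨hA, hB⟩
  · -- i = j + σ and i - 1 = j, so σ = 1
    rw [hB] at hA
    have hσ1 : σ = 1 := by linear_combination hA
    have hne : j + σ + 1 ≠ i := by
      rw [hB, hσ1]
      intro h
      have : (1 : Fin N) = 0 := by linear_combination h
      exact one_ne_zero' hN this
    rw [flip_apply_ne _ hne, hσ1]
    rw [D_apply]
    have harg : j + 1 + 1 - (j + 1) = 1 := by ring
    rw [harg, Fin.val_one', Nat.mod_eq_of_lt (by omega : 1 < N)]
    norm_num
  · -- i = j and i - 1 = j + σ, so σ = -1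
    rw [hB] at hA
    have hσ1 : σ = -1 := by linear_combination -hA
    have heq : j + σ + 1 = i := by rw [hB, hσ1]; ring
    rw [heq, flip_apply_self]
    congr 1
    rw [D_apply]
    have harg : i - (j + 1) = -1 := by rw [hB]; ring
    rw [harg, val_neg_one hN]
    have hN2 : N % 2 = 1 := Nat.odd_iff.mp hNodd
    have hmod : (N - 1) % 2 = 0 := by omega
    rw [hmod]
    simp

lemma stepD (hN : 3 ≤ N) (hNodd : Odd N) {σ : Fin N} (hσ : σ = 1 ∨ σ = -1)
    (hstep : ∀ (x : Fin N → Bool) (j : Fin N), x j = x (j + 1) →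
      ∃ i : Fin N, 0 < rate p x i ∧ ({i - 1, i} : Finset (Fin N)) = {j, j + σ})
    (j : Fin N) (b : Bool) : 0 < Pmat p (D j b) (D (j + σ) (!b)) := by
  have hj : D j b j = D j b (j + 1) := by
    have : j ∈ E (D j b) := by rw [E_D hN hNodd]; exact Finset.mem_singleton_self _
    exact mem_E.mp this
  obtain ⟨i, hrate, hpair⟩ := hstep (D j b) j hj
  rw [← D_flip_eq hN hNodd hσ hpair]
  exact Pmat_flip_pos p hrate

/-! ### walks along the defect cycle -/

lemma walkD (hN : 3 ≤ N) (hNodd : Odd N) (hp : ∀ m, p m ∈ Set.Icc (0:ℝ) 1)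
    {σ : Fin N} (hσ : σ = 1 ∨ σ = -1)
    (hstep : ∀ (x : Fin N → Bool) (j : Fin N), x j = x (j + 1) →
      ∃ i : Fin N, 0 < rate p x i ∧ ({i - 1, i} : Finset (Fin N)) = {j, j + σ})
    (j : Fin N) (b : Bool) (t : ℕ) :
    0 < (Pmat p ^ t) (D j b) (D (j + σ * (t : Fin N)) (xor b (decide (t % 2 = 1)))) := by
  induction t with
  | zero =>
    have h0 : D (j + σ * ((0:ℕ) : Fin N)) (xor b (decide (0 % 2 = 1))) = D j b := by
      norm_num
    rw [h0, pow_zero, Matrix.one_apply_eq]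
    norm_num
  | succ t ih =>
    have hmid := stepD hN hNodd hσ hstep (j + σ * (t : Fin N)) (xor b (decide (t % 2 = 1)))
    have hle := entry_mul_le hp t 1 (D j b)
      (D (j + σ * (t : Fin N)) (xor b (decide (t % 2 = 1))))
      (D (j + σ * (t : Fin N) + σ) (!(xor b (decide (t % 2 = 1)))))
    rw [pow_one] at hle
    have hpos := lt_of_lt_of_le (mul_pos ih hmid) hle
    have harg1 : j + σ * (((t+1:ℕ)) : Fin N) = j + σ * (t : Fin N) + σ := by
      push_cast
      ring
    have harg2 : xor b (decide ((t + 1) % 2 = 1)) = !(xor b (decide (t % 2 = 1))) := by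
      rcases Nat.mod_two_eq_zero_or_one t with hm | hm
      · have hm1 : (t + 1) % 2 = 1 := by omega
        rw [hm, hm1]
        cases b <;> rfl
      · have hm1 : (t + 1) % 2 = 0 := by omega
        rw [hm, hm1]
        cases b <;> rfl
    rw [harg1, harg2]
    exact hpos

/-! ### reducing the number of defects -/

lemma val_cast_eq_self {d : ℕ} (h : d < N) : ((d : Fin N)).val = d := val_cast_of_lt h

lemma sigma_mul_ne_zero {σ : Fin N} (hσ : σ = 1 ∨ σ = -1) {a : Fin N} (ha : a ≠ 0) :
    σ * a ≠ 0 := by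
  rcases hσ with rfl | rfl
  · rwa [one_mul]
  · rw [neg_one_mul]
    exact fun h => ha (neg_eq_zero.mp h)

lemma sigma_sq {σ : Fin N} (hσ : σ = 1 ∨ σ = -1) : σ * σ = 1 := by
  rcases hσ with rfl | rfl <;> ring

lemma reduce (hN : 3 ≤ N) (hp : ∀ m, p m ∈ Set.Icc (0:ℝ) 1)
    {σ : Fin N} (hσ : σ = 1 ∨ σ = -1)
    (hstep : ∀ (x : Fin N → Bool) (j : Fin N), x j = x (j + 1) →
      ∃ i : Fin N, 0 < rate p x i ∧ ({i - 1, i} : Finset (Fin N)) = {j, j + σ}) :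
    ∀ d : ℕ, 1 ≤ d → d < N → ∀ (x : Fin N → Bool) (j : Fin N),
      j ∈ E x → (j + σ * (d : Fin N)) ∈ E x →
      ∃ y, Accessible p x y ∧ (E y).card < (E x).card := by
  intro d
  induction d using Nat.strong_induction_on with
  | _ d IH =>
  intro hd1 hdN x j hj hj'
  have hσ0 : σ ≠ 0 := sigma_ne_zero hN hσ
  obtain ⟨i, hrate, hpair⟩ := hstep x j (mem_E.mp hj)
  set y1 := flip x i with hy1
  have hacc1 : Accessible p x y1 := accessible_step p (Pmat_flip_pos p hrate)
  have hcard0 : 1 ≤ (E x).card := Finset.card_pos.mpr ⟨j, hj⟩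
  have htog : ∀ e, e ∈ E y1 ↔ (if e = j ∨ e = j + σ then e ∉ E x else e ∈ E x) := by
    intro e
    rw [hy1, mem_E_flip hN x i e]
    have hmem : (e = i - 1 ∨ e = i) ↔ (e = j ∨ e = j + σ) := by
      have h1 := Finset.ext_iff.mp hpair e
      simpa using h1
    by_cases hc : e = i - 1 ∨ e = i
    · rw [if_pos hc, if_pos (hmem.mp hc)]
    · rw [if_neg hc, if_neg (fun h => hc (hmem.mpr h))]
  have hjσ : j ≠ j + σ := fun hc => hσ0 (by linear_combination -hc)
  by_cases hcase : (j + σ) ∈ E x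
  · -- annihilation of two adjacent defects
    refine ⟨y1, hacc1, ?_⟩
    have hE : E y1 = ((E x).erase j).erase (j + σ) := by
      ext e
      rw [htog, Finset.mem_erase, Finset.mem_erase]
      by_cases h1 : e = j
      · subst h1
        rw [if_pos (Or.inl rfl)]
        simp [hj]
      · by_cases h2 : e = j + σ
        · subst h2
          rw [if_pos (Or.inr rfl)]
          simp [hcase]
        · rw [if_neg (by tauto)]
          simp [h1, h2]
    rw [hE, Finset.card_erase_of_mem (Finset.mem_erase.mpr ⟨Ne.symm hjσ, hcase⟩),
      Finset.card_erase_of_mem hj]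
    omega
  · -- the defect moves one step towards the other one
    have hd2 : 2 ≤ d := by
      rcases Nat.lt_or_ge d 2 with h | h
      · exfalso
        have hd1' : d = 1 := by omega
        rw [hd1'] at hj'
        rw [Nat.cast_one, mul_one] at hj'
        exact hcase hj'
      · exact h
    have hE : E y1 = insert (j + σ) ((E x).erase j) := by
      ext e
      rw [htog, Finset.mem_insert, Finset.mem_erase]
      by_cases h1 : e = j
      · subst h1
        rw [if_pos (Or.inl rfl)]
        simp [hj, hjσ]
      · by_cases h2 : e = j + σ
        · subst h2
          rw [if_pos (Or.inr rfl)]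
          simp [hcase]
        · rw [if_neg (by tauto)]
          simp [h1, h2]
    have hcard : (E y1).card = (E x).card := by
      rw [hE, Finset.card_insert_of_notMem, Finset.card_erase_of_mem hj]
      · omega
      · rw [Finset.mem_erase]
        exact fun h => hcase h.2
    have hdval : ((d : Fin N)).val = d := val_cast_of_lt hdN
    have hdne0 : (d : Fin N) ≠ 0 := by
      intro h
      have := congrArg Fin.val h
      rw [hdval] at this
      simp at this
      omega
    have hne1 : j + σ * (d : Fin N) ≠ j := by
      intro h
      have h2 : σ * (d : Fin N) = 0 := by linear_combination h
      exact sigma_mul_ne_zero hσ hdne0 h2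
    have hdm1 : ((d - 1 : ℕ) : Fin N) = (d : Fin N) - 1 := by
      push_cast [Nat.cast_sub (by omega : 1 ≤ d)]
      ring
    have hne2 : j + σ * (d : Fin N) ≠ j + σ := by
      intro h
      have h2 : σ * ((d : Fin N) - 1) = 0 := by linear_combination h
      have h3 : ((d - 1 : ℕ) : Fin N) ≠ 0 := by
        intro h4
        have := congrArg Fin.val h4
        rw [val_cast_of_lt (by omega : d - 1 < N)] at this
        simp at this
        omega
      rw [← hdm1] at h2
      exact sigma_mul_ne_zero hσ h3 h2
    have hm1 : (j + σ) ∈ E y1 := by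
      rw [htog, if_pos (Or.inr rfl)]
      exact hcase
    have hm2 : (j + σ * (d : Fin N)) ∈ E y1 := by
      rw [htog, if_neg (by push_neg; exact ⟨hne1, hne2⟩)]
      exact hj'
    have hrw : j + σ * (d : Fin N) = (j + σ) + σ * ((d - 1 : ℕ) : Fin N) := by
      rw [hdm1]
      ring
    rw [hrw] at hm2
    obtain ⟨y, hay, hcy⟩ := IH (d - 1) (by omega) (by omega) (by omega) y1 (j + σ) hm1 hm2
    refine ⟨y, accessible_trans hp hacc1 hay, ?_⟩
    omega

/-! ### reaching the defect set -/

lemma reach (hN : 3 ≤ N) (hNodd : Odd N) (hp : ∀ m, p m ∈ Set.Icc (0:ℝ) 1)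
    {σ : Fin N} (hσ : σ = 1 ∨ σ = -1)
    (hstep : ∀ (x : Fin N → Bool) (j : Fin N), x j = x (j + 1) →
      ∃ i : Fin N, 0 < rate p x i ∧ ({i - 1, i} : Finset (Fin N)) = {j, j + σ}) :
    ∀ x : Fin N → Bool, ∃ y, Accessible p x y ∧ y ∈ DefectSet N := by
  have main : ∀ n : ℕ, ∀ x : Fin N → Bool, (E x).card ≤ n →
      ∃ y, Accessible p x y ∧ (E y).card = 1 := by
    intro n
    induction n with
    | zero =>
      intro x hx
      exfalso
      have := card_E_odd hNodd x
      rw [Nat.odd_iff] at this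
      omega
    | succ n ih =>
      intro x hx
      rcases eq_or_ne ((E x).card) 1 with h1 | h1
      · exact ⟨x, accessible_refl p x, h1⟩
      · have hodd := card_E_odd hNodd x
        rw [Nat.odd_iff] at hodd
        have h2 : 1 < (E x).card := by omega
        obtain ⟨j, hj, j', hj', hne⟩ := Finset.one_lt_card.mp h2
        set d := ((j' - j) * σ).val with hd
        have hd0 : ((j' - j) * σ) ≠ 0 := by
          rw [mul_comm]
          exact sigma_mul_ne_zero hσ (sub_ne_zero.mpr (Ne.symm hne))
        have hd1 : 1 ≤ d := by
          rcases Nat.eq_zero_or_pos d with h | h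
          · exfalso
            apply hd0
            apply Fin.ext
            rw [Fin.val_zero]
            omega
          · exact h
        have hdN : d < N := Fin.is_lt _
        have hjd : j + σ * (d : Fin N) = j' := by
          rw [hd, Fin.cast_val_eq_self]
          have : σ * ((j' - j) * σ) = (j' - j) * (σ * σ) := by ring
          rw [this, sigma_sq hσ]
          ring
        obtain ⟨y1, hacc, hlt⟩ := reduce hN hp hσ hstep d hd1 hdN x j hj (hjd ▸ hj')
        obtain ⟨y, hay, hcy⟩ := ih y1 (by omega)
        exact ⟨y, accessible_trans hp hacc hay, hcy⟩
  intro x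
  obtain ⟨y, hacc, hcy⟩ := main (E x).card x le_rfl
  exact ⟨y, hacc, mem_DefectSet.mpr hcy⟩

/-! ### bounded-time accessibility between defect states -/

lemma accessD (hN : 3 ≤ N) (hNodd : Odd N) (hp : ∀ m, p m ∈ Set.Icc (0:ℝ) 1)
    {σ : Fin N} (hσ : σ = 1 ∨ σ = -1)
    (hstep : ∀ (x : Fin N → Bool) (j : Fin N), x j = x (j + 1) →
      ∃ i : Fin N, 0 < rate p x i ∧ ({i - 1, i} : Finset (Fin N)) = {j, j + σ})
    (j j' : Fin N) (b b' : Bool) :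
    ∃ t : ℕ, t ≤ 2 * N ∧ 0 < (Pmat p ^ t) (D j b) (D j' b') := by
  set d := ((j' - j) * σ).val with hd
  have hdN : d < N := Fin.is_lt _
  have hjd : j + σ * ((d : ℕ) : Fin N) = j' := by
    rw [hd, Fin.cast_val_eq_self]
    have hh : σ * ((j' - j) * σ) = (j' - j) * (σ * σ) := by ring
    rw [hh, sigma_sq hσ]
    ring
  by_cases hcol : xor b b' = decide (d % 2 = 1)
  · refine ⟨d, by omega, ?_⟩
    have hw := walkD hN hNodd hp hσ hstep j b d
    rw [hjd] at hw
    have hcolor : xor b (decide (d % 2 = 1)) = b' := by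
      rw [← hcol]
      cases b <;> cases b' <;> rfl
    rwa [hcolor] at hw
  · refine ⟨d + N, by omega, ?_⟩
    have hw := walkD hN hNodd hp hσ hstep j b (d + N)
    have hcast : (((d + N : ℕ)) : Fin N) = ((d : ℕ) : Fin N) := by
      push_cast [Fin.natCast_self]
      ring
    rw [hcast, hjd] at hw
    have hN2 : N % 2 = 1 := Nat.odd_iff.mp hNodd
    have hdec : decide ((d + N) % 2 = 1) = !decide (d % 2 = 1) := by
      rcases Nat.mod_two_eq_zero_or_one d with hm | hm
      · have h1 : (d + N) % 2 = 1 := by omega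
        rw [h1, hm]
        rfl
      · have h1 : (d + N) % 2 = 0 := by omega
        rw [h1, hm]
        rfl
    rw [hdec] at hw
    have hcolor : xor b (!decide (d % 2 = 1)) = b' := by
      rcases Bool.eq_false_or_eq_true (decide (d % 2 = 1)) with hc | hc <;>
        rw [hc] at hcol ⊢ <;> cases b <;> cases b' <;> simp_all
    rwa [hcolor] at hw

end Aux

/-! ### the main theorem -/

theorem stmt_3' [NeZero N] (hN : 3 ≤ N) (hNodd : Odd N)
    (p : Fin 4 → ℝ) (hp : ∀ m, p m ∈ Set.Icc (0:ℝ) 1)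
    (hp0 : p 0 = 1) (hp3 : p 3 = 0)
    (hsum_pos : 0 < p 1 + p 2) (hsum_lt : p 1 + p 2 < 2) :
    Nat.card (DefectSet N) = 2 * N ∧
    (∀ x ∈ DefectSet N, ∀ y ∉ DefectSet N, Pmat p x y = 0) ∧
    (∀ x ∈ DefectSet N, ∀ y ∈ DefectSet N, Accessible p x y) ∧
    (∃ n : ℕ, ∀ m ≥ n, ∀ x ∈ DefectSet N, ∀ y ∈ DefectSet N, 0 < (Pmat p ^ m) x y) ∧
    (∀ x ∉ DefectSet N, Transient p x) := by
  obtain ⟨σ, hσ, hstep⟩ := mode_exists hN hp hp0 hp3 hsum_pos hsum_lt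
  refine ⟨card_DefectSet hN hNodd, closed_step hN hp0 hp3, ?_, ?_, ?_⟩
  · -- irreducible
    intro x hx y hy
    obtain ⟨jx, hjx⟩ := Finset.card_eq_one.mp (mem_DefectSet.mp hx)
    obtain ⟨jy, hjy⟩ := Finset.card_eq_one.mp (mem_DefectSet.mp hy)
    have hxD := D_uniq hN hjx
    have hyD := D_uniq hN hjy
    obtain ⟨t, _, hpos⟩ := accessD hN hNodd hp hσ hstep jx jy (x (jx + 1)) (y (jy + 1))
    rw [← hxD, ← hyD] at hpos
    exact ⟨t, hpos⟩
  · -- primitivity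
    refine ⟨2 * N, fun m hm x hx y hy => ?_⟩
    obtain ⟨jx, hjx⟩ := Finset.card_eq_one.mp (mem_DefectSet.mp hx)
    obtain ⟨jy, hjy⟩ := Finset.card_eq_one.mp (mem_DefectSet.mp hy)
    have hxD := D_uniq hN hjx
    have hyD := D_uniq hN hjy
    obtain ⟨t, ht, hpos⟩ := accessD hN hNodd hp hσ hstep jx jy (x (jx + 1)) (y (jy + 1))
    rw [← hxD, ← hyD] at hpos
    have hloop := pow_diag_pos hp (loop_pos hN hp hp0 hp3 hx) (m - t)
    have hle := entry_mul_le hp (m - t) t x x y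
    have hmt : m - t + t = m := by omega
    rw [hmt] at hle
    exact lt_of_lt_of_le (mul_pos hloop hpos) hle
  · -- transience
    intro x hx
    obtain ⟨y, hacc, hy⟩ := reach hN hNodd hp hσ hstep x
    refine ⟨y, hacc, ?_⟩
    rintro ⟨n, hn⟩
    rw [closed_pow hN hp hp0 hp3 n y hy x hx] at hn
    exact lt_irrefl 0 hn


/-- for `p_0 = 1`, `p_3 = 0`, `0 < p_1 + p_2 < 2` and `N` odd, the set of
`2N` defect states is closed, irreducible and aperiodic, and all other states are
transient. (Aperiodicity of the closed irreducible finite class is expressed in the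
equivalent primitivity form: all sufficiently high powers of `P` are positive on it.) -/
theorem stmt_3 [NeZero N] (hN : 3 ≤ N) (hNodd : Odd N)
    (p : Fin 4 → ℝ) (hp : ∀ m, p m ∈ Set.Icc (0:ℝ) 1)
    (hp0 : p 0 = 1) (hp3 : p 3 = 0)
    (hsum_pos : 0 < p 1 + p 2) (hsum_lt : p 1 + p 2 < 2) :
    -- the defect set has 2N elements
    Nat.card (DefectSet N) = 2 * N ∧
    -- closed
    (∀ x ∈ DefectSet N, ∀ y ∉ DefectSet N, Pmat p x y = 0) ∧
    -- irreducible
    (∀ x ∈ DefectSet N, ∀ y ∈ DefectSet N, Accessible p x y) ∧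
    -- aperiodic (primitivity on the class)
    (∃ n : ℕ, ∀ m ≥ n, ∀ x ∈ DefectSet N, ∀ y ∈ DefectSet N, 0 < (Pmat p ^ m) x y) ∧
    -- all other states are transient
    (∀ x ∉ DefectSet N, Transient p x) := by
  exact stmt_3' hN hNodd p hp hp0 hp3 hsum_pos hsum_lt

end Stmt3
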